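/- Let X, Y be finite sets with |X| = N, |Y| = M, let w ∈ ℝ^{N×M} have nonnegative entries, and ρ > 0. Then min over probability vectors q ∈ ℝ^N of ∑_j (∑_i q_i w_{ij})^{1+ρ} equals max over probability vectors r ∈ ℝ^M of (min_i ∑_j w_{ij} r_j^{ρ/(1+ρ)})^{1+ρ}. -/

import Mathlib

open Real BigOperators

/-- Weak duality via Hölder's inequality. -/
lemma gallager_aux_weak (N M : ℕ) (hN : 0 < N)
    (w : Fin N → Fin M → ℝ) (hw : ∀ i j, 0 ≤ w i j) (ρ : ℝ) (hρ : 0 < ρ)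
    (q : Fin N → ℝ) (hq0 : ∀ i, 0 ≤ q i) (hq1 : ∑ i, q i = 1)
    (r : Fin M → ℝ) (hr0 : ∀ j, 0 ≤ r j) (hr1 : ∑ j, r j = 1) :
    (⨅ i, ∑ j, w i j * (r j) ^ (ρ / (1 + ρ))) ^ (1 + ρ)
      ≤ ∑ j, (∑ i, q i * w i j) ^ (1 + ρ) := by
  haveI : Nonempty (Fin N) := ⟨⟨0, hN⟩⟩
  have h1ρ : (0:ℝ) < 1 + ρ := by linarith
  set s : ℝ := ρ / (1 + ρ) with hs
  set a : Fin M → ℝ := fun j => ∑ i, q i * w i j with ha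
  have ha0 : ∀ j, 0 ≤ a j := fun j =>
    Finset.sum_nonneg fun i _ => mul_nonneg (hq0 i) (hw i j)
  set S : Fin N → ℝ := fun i => ∑ j, w i j * (r j) ^ s with hS
  have hS0 : ∀ i, 0 ≤ S i := fun i =>
    Finset.sum_nonneg fun j _ => mul_nonneg (hw i j) (Real.rpow_nonneg (hr0 j) _)
  have hinf0 : 0 ≤ ⨅ i, S i := le_ciInf fun i => hS0 i
  have hCnn : 0 ≤ ∑ j, (a j) ^ (1 + ρ) :=
    Finset.sum_nonneg fun j _ => Real.rpow_nonneg (ha0 j) _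
  -- step 1 : inf ≤ ∑_j a_j r_j^s
  have step1 : (⨅ i, S i) ≤ ∑ j, a j * (r j) ^ s := by
    calc (⨅ i, S i) = ∑ i, q i * (⨅ i', S i') := by
          rw [← Finset.sum_mul, hq1, one_mul]
      _ ≤ ∑ i, q i * S i := by
          refine Finset.sum_le_sum fun i _ => ?_
          exact mul_le_mul_of_nonneg_left (ciInf_le (Set.Finite.bddBelow
            (Set.finite_range S)) i) (hq0 i)
      _ = ∑ j, a j * (r j) ^ s := by
          simp only [hS, Finset.mul_sum]
          rw [Finset.sum_comm]
          refine Finset.sum_congr rfl fun j _ => ?_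
          rw [ha, Finset.sum_mul]
          exact Finset.sum_congr rfl fun i _ => by ring
  -- step 2 : Hölder
  have hconj : (1 + ρ).HolderConjugate ((1 + ρ) / ρ) := by
    refine Real.holderConjugate_iff.mpr ⟨?_, ?_⟩
    · linarith
    · field_simp
  have step2 : ∑ j, a j * (r j) ^ s
      ≤ (∑ j, (a j) ^ (1 + ρ)) ^ (1 / (1 + ρ)) := by
    have h := Real.inner_le_Lp_mul_Lq_of_nonneg (Finset.univ) hconj
      (f := a) (g := fun j => (r j) ^ s)
      (fun j _ => ha0 j) (fun j _ => Real.rpow_nonneg (hr0 j) _)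
    have hre : ∀ j : Fin M, ((r j) ^ s) ^ ((1 + ρ) / ρ) = r j := by
      intro j
      rw [← Real.rpow_mul (hr0 j), hs,
        show ρ / (1 + ρ) * ((1 + ρ) / ρ) = 1 by field_simp, Real.rpow_one]
    simp only [hre] at h
    rw [hr1, Real.one_rpow, mul_one] at h
    exact h
  have hle : (⨅ i, S i) ≤ (∑ j, (a j) ^ (1 + ρ)) ^ (1 / (1 + ρ)) :=
    le_trans step1 step2
  calc (⨅ i, S i) ^ (1 + ρ)
      ≤ ((∑ j, (a j) ^ (1 + ρ)) ^ (1 / (1 + ρ))) ^ (1 + ρ) :=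
        Real.rpow_le_rpow hinf0 hle h1ρ.le
    _ = ∑ j, (a j) ^ (1 + ρ) := by
        rw [← Real.rpow_mul hCnn]
        rw [one_div, inv_mul_cancel₀ h1ρ.ne', Real.rpow_one]

/-- First-order optimality (KKT) at a minimizer over the simplex. -/
lemma gallager_aux_kkt (N M : ℕ) (w : Fin N → Fin M → ℝ) (hw : ∀ i j, 0 ≤ w i j)
    (ρ : ℝ) (hρ : 0 < ρ) (q : Fin N → ℝ) (hq0 : ∀ i, 0 ≤ q i) (hq1 : ∑ i, q i = 1)
    (hmin : ∀ p : Fin N → ℝ, (∀ i, 0 ≤ p i) → (∑ i, p i = 1) →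
      ∑ j, (∑ i, q i * w i j) ^ (1 + ρ) ≤ ∑ j, (∑ i, p i * w i j) ^ (1 + ρ))
    (i : Fin N) :
    ∑ j, (∑ i', q i' * w i' j) ^ (1 + ρ)
      ≤ ∑ j, w i j * (∑ i', q i' * w i' j) ^ ρ := by
  have h1ρ : (0:ℝ) < 1 + ρ := by linarith
  set a : Fin M → ℝ := fun j => ∑ i', q i' * w i' j with ha
  have ha0 : ∀ j, 0 ≤ a j := fun j =>
    Finset.sum_nonneg fun k _ => mul_nonneg (hq0 k) (hw k j)
  set C : ℝ := ∑ j, (a j) ^ (1 + ρ) with hC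
  set D : ℝ := ∑ j, w i j * (a j) ^ ρ with hD
  by_contra hcon
  push_neg at hcon
  -- the perturbed function
  set φ : ℝ → ℝ := fun t => ∑ j, (a j + t * (w i j - a j)) ^ (1 + ρ) with hφ
  have key : ∀ j : Fin M, HasDerivAt (fun t : ℝ => (a j + t * (w i j - a j)) ^ (1 + ρ))
      ((1 + ρ) * (a j) ^ ρ * (w i j - a j)) 0 := by
    intro j
    have h1 : HasDerivAt (fun t : ℝ => a j + t * (w i j - a j)) (w i j - a j) 0 :=
      (hasDerivAt_mul_const _).const_add _
    have h2 : HasDerivAt (fun x : ℝ => x ^ (1 + ρ))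
        ((1 + ρ) * (a j + 0 * (w i j - a j)) ^ (1 + ρ - 1)) (a j + 0 * (w i j - a j)) :=
      Real.hasDerivAt_rpow_const (Or.inr (by linarith))
    have h3 := h2.comp 0 h1
    have e : (1 + ρ) * (a j + 0 * (w i j - a j)) ^ (1 + ρ - 1) * (w i j - a j)
        = (1 + ρ) * (a j) ^ ρ * (w i j - a j) := by
      norm_num
    rw [e] at h3
    exact h3
  have hderiv : HasDerivAt φ ((1 + ρ) * (D - C)) 0 := by
    have h := HasDerivAt.fun_sum (fun j (_ : j ∈ Finset.univ) => key j)
    have hsum : (∑ j, (1 + ρ) * (a j) ^ ρ * (w i j - a j)) = (1 + ρ) * (D - C) := by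
      have e : ∀ j : Fin M, (a j) ^ (1 + ρ) = a j * (a j) ^ ρ := by
        intro j
        rw [Real.rpow_add' (ha0 j) (by positivity), Real.rpow_one]
      calc (∑ j, (1 + ρ) * (a j) ^ ρ * (w i j - a j))
          = ∑ j, ((1 + ρ) * (w i j * (a j) ^ ρ) - (1 + ρ) * ((a j) ^ (1 + ρ))) := by
            refine Finset.sum_congr rfl fun j _ => ?_
            rw [e j]; ring
        _ = (1 + ρ) * (D - C) := by
            rw [Finset.sum_sub_distrib, ← Finset.mul_sum, ← Finset.mul_sum, ← mul_sub]
    rw [hsum] at h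
    exact h
  have hderiv_neg : (1 + ρ) * (D - C) < 0 :=
    mul_neg_of_pos_of_neg h1ρ (by linarith)
  have hslope := hasDerivAt_iff_tendsto_slope.mp hderiv
  have hev : ∀ᶠ t in nhdsWithin (0:ℝ) {(0:ℝ)}ᶜ, slope φ 0 t < 0 :=
    hslope.eventually_lt_const hderiv_neg
  have hmono : nhdsWithin (0:ℝ) (Set.Ioi 0) ≤ nhdsWithin (0:ℝ) {(0:ℝ)}ᶜ :=
    nhdsWithin_mono 0 (fun x hx => ne_of_gt hx)
  have hev2 : ∀ᶠ t in nhdsWithin (0:ℝ) (Set.Ioi 0),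
      slope φ 0 t < 0 ∧ t ∈ Set.Ioo (0:ℝ) 1 := by
    refine (hev.filter_mono hmono).and ?_
    exact Filter.eventually_of_mem (Ioo_mem_nhdsGT_of_mem ⟨le_refl 0, one_pos⟩) fun x hx => hx
  obtain ⟨t, hslope_t, ht0, ht1⟩ := hev2.exists
  -- from negative slope: φ t < φ 0
  have hφt : φ t < φ 0 := by
    rw [slope_def_field, sub_zero] at hslope_t
    rcases div_neg_iff.mp hslope_t with ⟨h1, h2⟩ | ⟨h1, h2⟩
    · exact absurd ht0 (not_lt.mpr h2.le)
    · linarith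
  -- the perturbed point lies in the simplex
  set p : Fin N → ℝ := fun k => (1 - t) * q k + t * (if k = i then 1 else 0) with hp
  have hp0 : ∀ k, 0 ≤ p k := by
    intro k
    refine add_nonneg (mul_nonneg (by linarith) (hq0 k)) (mul_nonneg ht0.le ?_)
    split <;> norm_num
  have hp1 : ∑ k, p k = 1 := by
    rw [hp]
    rw [Finset.sum_add_distrib, ← Finset.mul_sum, ← Finset.mul_sum, hq1]
    rw [Finset.sum_ite_eq' Finset.univ i (fun _ => (1:ℝ))]
    simp
  have hpa : ∀ j, ∑ k, p k * w k j = a j + t * (w i j - a j) := by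
    intro j
    have hstep : ∑ k, p k * w k j
        = ∑ k, ((1 - t) * (q k * w k j) + t * (if k = i then w k j else 0)) := by
      refine Finset.sum_congr rfl fun k _ => ?_
      by_cases h : k = i <;> simp [hp, h] <;> ring
    rw [hstep, Finset.sum_add_distrib, ← Finset.mul_sum, ← Finset.mul_sum,
      Finset.sum_ite_eq' Finset.univ i (fun k => w k j)]
    simp only [Finset.mem_univ, if_true, ← ha]
    ring
  have hmin' := hmin p hp0 hp1
  have hfp : ∑ j, (∑ k, p k * w k j) ^ (1 + ρ) = φ t := by
    refine Finset.sum_congr rfl fun j _ => ?_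
    rw [hpa j]
  have hφ0 : φ 0 = C := by
    rw [hφ, hC]
    refine Finset.sum_congr rfl fun j _ => ?_
    norm_num
  rw [hfp] at hmin'
  rw [hφ0] at hφt
  have : C ≤ φ t := hmin'
  linarith

theorem gallager_ck_lagrange_duality (N M : ℕ) (hN : 0 < N) (hM : 0 < M)
    (w : Fin N → Fin M → ℝ) (hw : ∀ i j, 0 ≤ w i j) (ρ : ℝ) (hρ : 0 < ρ) :
    sInf {v : ℝ | ∃ q : Fin N → ℝ, (∀ i, 0 ≤ q i) ∧ (∑ i, q i = 1) ∧
        v = ∑ j, (∑ i, q i * w i j) ^ (1 + ρ)}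
      = sSup {v : ℝ | ∃ r : Fin M → ℝ, (∀ j, 0 ≤ r j) ∧ (∑ j, r j = 1) ∧
        v = (⨅ i, ∑ j, w i j * (r j) ^ (ρ / (1 + ρ))) ^ (1 + ρ)} := by
  haveI hNe : Nonempty (Fin N) := ⟨⟨0, hN⟩⟩
  haveI hMe : Nonempty (Fin M) := ⟨⟨0, hM⟩⟩
  have h1ρ : (0:ℝ) < 1 + ρ := by linarith
  set f : (Fin N → ℝ) → ℝ := fun q => ∑ j, (∑ i, q i * w i j) ^ (1 + ρ) with hf
  set g : (Fin M → ℝ) → ℝ :=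
    fun r => (⨅ i, ∑ j, w i j * (r j) ^ (ρ / (1 + ρ))) ^ (1 + ρ) with hg
  -- compactness and existence of a minimizer
  have hfc : Continuous f := by
    refine continuous_finset_sum _ fun j _ => ?_
    exact (Real.continuous_rpow_const h1ρ.le).comp
      (continuous_finset_sum _ fun i _ => (continuous_apply i).mul continuous_const)
  have hsimplex : IsCompact (stdSimplex ℝ (Fin N)) := isCompact_stdSimplex _ _
  have hne : (stdSimplex ℝ (Fin N)).Nonempty := by
    refine ⟨fun _ => (N : ℝ)⁻¹, fun _ => by positivity, ?_⟩
    rw [Finset.sum_const, Finset.card_univ, Fintype.card_fin, nsmul_eq_mul,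
      mul_inv_cancel₀ (by exact_mod_cast hN.ne')]
  obtain ⟨qs, hqs, hqsmin⟩ := hsimplex.exists_isMinOn hne hfc.continuousOn
  obtain ⟨hqs0, hqs1⟩ := hqs
  set a : Fin M → ℝ := fun j => ∑ i, qs i * w i j with ha
  have ha0 : ∀ j, 0 ≤ a j := fun j =>
    Finset.sum_nonneg fun k _ => mul_nonneg (hqs0 k) (hw k j)
  set C : ℝ := f qs with hCdef
  have hC0 : 0 ≤ C :=
    Finset.sum_nonneg fun j _ => Real.rpow_nonneg (ha0 j) _
  have hmin' : ∀ p : Fin N → ℝ, (∀ i, 0 ≤ p i) → (∑ i, p i = 1) → C ≤ f p :=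
    fun p hp0 hp1 => hqsmin ⟨hp0, hp1⟩
  -- the sets
  set A : Set ℝ := {v : ℝ | ∃ q : Fin N → ℝ, (∀ i, 0 ≤ q i) ∧ (∑ i, q i = 1) ∧
    v = ∑ j, (∑ i, q i * w i j) ^ (1 + ρ)} with hA
  set B : Set ℝ := {v : ℝ | ∃ r : Fin M → ℝ, (∀ j, 0 ≤ r j) ∧ (∑ j, r j = 1) ∧
    v = (⨅ i, ∑ j, w i j * (r j) ^ (ρ / (1 + ρ))) ^ (1 + ρ)} with hB
  have hCA : C ∈ A := ⟨qs, hqs0, hqs1, rfl⟩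
  have hlbA : ∀ v ∈ A, C ≤ v := by
    rintro v ⟨q, h0, h1, rfl⟩
    exact hmin' q h0 h1
  have hubB : ∀ v ∈ B, v ≤ C := by
    rintro v ⟨r, h0, h1, rfl⟩
    exact gallager_aux_weak N M hN w hw ρ hρ qs hqs0 hqs1 r h0 h1
  -- C belongs to B
  have hCB : C ∈ B := by
    by_cases hC : C = 0
    · -- uniform r works, since every element of B is in [0, C] = {0}
      refine ⟨fun _ => (M : ℝ)⁻¹, fun _ => by positivity, ?_, ?_⟩
      · rw [Finset.sum_const, Finset.card_univ, Fintype.card_fin, nsmul_eq_mul,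
          mul_inv_cancel₀ (by exact_mod_cast hM.ne')]
      · have hmem : ((⨅ i, ∑ j, w i j * (((M : ℝ)⁻¹)) ^ (ρ / (1 + ρ))) ^ (1 + ρ)) ∈ B := by
          refine ⟨fun _ => (M : ℝ)⁻¹, fun _ => by positivity, ?_, rfl⟩
          rw [Finset.sum_const, Finset.card_univ, Fintype.card_fin, nsmul_eq_mul,
            mul_inv_cancel₀ (by exact_mod_cast hM.ne')]
        have hle := hubB _ hmem
        have hge : 0 ≤ (⨅ i, ∑ j, w i j * (((M : ℝ)⁻¹)) ^ (ρ / (1 + ρ))) ^ (1 + ρ) := by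
          apply Real.rpow_nonneg
          refine le_ciInf fun i => Finset.sum_nonneg fun j _ =>
            mul_nonneg (hw i j) (Real.rpow_nonneg (by positivity) _)
        rw [hC]
        linarith
    · have hCpos : 0 < C := lt_of_le_of_ne hC0 (Ne.symm hC)
      set r : Fin M → ℝ := fun j => (a j) ^ (1 + ρ) / C with hr
      have hr0 : ∀ j, 0 ≤ r j := fun j =>
        div_nonneg (Real.rpow_nonneg (ha0 j) _) hC0
      have hr1 : ∑ j, r j = 1 := by
        have hCC : (∑ j, (a j) ^ (1 + ρ)) = C := rfl
        rw [hr, ← Finset.sum_div, hCC]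
        exact div_self hC
      refine ⟨r, hr0, hr1, ?_⟩
      -- compute (r j) ^ (ρ/(1+ρ))
      have hrs : ∀ j, (r j) ^ (ρ / (1 + ρ)) = (a j) ^ ρ / C ^ (ρ / (1 + ρ)) := by
        intro j
        rw [hr]
        rw [Real.div_rpow (Real.rpow_nonneg (ha0 j) _) hC0]
        congr 1
        rw [← Real.rpow_mul (ha0 j)]
        congr 1
        field_simp
      have hkkt := gallager_aux_kkt N M w hw ρ hρ qs hqs0 hqs1
        (fun p h0 h1 => hmin' p h0 h1) 
      have hSeq : ∀ i : Fin N, ∑ j, w i j * (r j) ^ (ρ / (1 + ρ))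
          = (∑ j, w i j * (a j) ^ ρ) / C ^ (ρ / (1 + ρ)) := by
        intro i
        rw [Finset.sum_div]
        refine Finset.sum_congr rfl fun j _ => ?_
        rw [hrs j, mul_div_assoc]
      have hCs : (0:ℝ) < C ^ (ρ / (1 + ρ)) := Real.rpow_pos_of_pos hCpos _
      have hSge : ∀ i : Fin N, C ^ (1 / (1 + ρ))
          ≤ ∑ j, w i j * (r j) ^ (ρ / (1 + ρ)) := by
        intro i
        rw [hSeq i]
        rw [le_div_iff₀ hCs]
        calc C ^ (1 / (1 + ρ)) * C ^ (ρ / (1 + ρ))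
            = C := by
              rw [← Real.rpow_add hCpos]
              have : 1 / (1 + ρ) + ρ / (1 + ρ) = 1 := by field_simp
              rw [this, Real.rpow_one]
          _ ≤ ∑ j, w i j * (a j) ^ ρ := hkkt i
      have hinfge : C ^ (1 / (1 + ρ)) ≤ ⨅ i, ∑ j, w i j * (r j) ^ (ρ / (1 + ρ)) :=
        le_ciInf hSge
      have hgr_ge : C ≤ (⨅ i, ∑ j, w i j * (r j) ^ (ρ / (1 + ρ))) ^ (1 + ρ) := by
        have := Real.rpow_le_rpow (Real.rpow_nonneg hC0 _) hinfge h1ρ.le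
        rwa [← Real.rpow_mul hC0, one_div, inv_mul_cancel₀ h1ρ.ne', Real.rpow_one] at this
      have hgr_le : (⨅ i, ∑ j, w i j * (r j) ^ (ρ / (1 + ρ))) ^ (1 + ρ) ≤ C :=
        hubB _ ⟨r, hr0, hr1, rfl⟩
      linarith
  -- conclude
  have hInf : sInf A = C :=
    le_antisymm (csInf_le ⟨C, hlbA⟩ hCA) (le_csInf ⟨C, hCA⟩ hlbA)
  have hSup : sSup B = C :=
    le_antisymm (csSup_le ⟨C, hCB⟩ hubB) (le_csSup ⟨C, hubB⟩ hCB)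
  rw [hInf, hSup]
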